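/- Let n ≥ 1 and let μ and ν be finite measures on ℝ^n such that for every u ∈ ℝ^n the function x ↦ exp(⟨u, x⟩) is integrable with respect to both μ and ν, and ∫ exp(⟨u, x⟩) μ(dx) = ∫ exp(⟨u, x⟩) ν(dx) for every u ∈ ℝ^n. Then μ = ν. -/

import Mathlib

open MeasureTheory Complex Filter Set Metric
open scoped Real ContDiff RealInnerProductSpace FourierTransform

namespace LaplaceUnique

variable {n : ℕ}

lemma integrableC (μ : Measure (Fin n → ℝ))
    (hμ : ∀ u : Fin n → ℝ, Integrable (fun x => Real.exp (∑ i, u i * x i)) μ)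
    (z : Fin n → ℂ) :
    Integrable (fun x : Fin n → ℝ => Complex.exp (∑ i, z i * x i)) μ := by
  have hmeas : AEStronglyMeasurable (fun x : Fin n → ℝ => Complex.exp (∑ i, z i * x i)) μ := by
    refine Continuous.aestronglyMeasurable ?_
    fun_prop
  refine (hμ (fun i => (z i).re)).mono' hmeas ?_
  filter_upwards with x
  rw [Complex.norm_exp]
  have : (∑ i, z i * (x i : ℂ)).re = ∑ i, (z i).re * x i := by
    rw [Complex.re_sum]
    exact Finset.sum_congr rfl fun i _ => by simp [Complex.mul_re]
  rw [this]

lemma sum_update (z : Fin n → ℂ) (k : Fin n) (w : ℂ) (x : Fin n → ℝ) :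
    ∑ i, Function.update z k w i * (x i : ℂ)
      = w * x k + ∑ i ∈ Finset.univ.erase k, z i * x i := by
  rw [← Finset.sum_erase_add _ _ (Finset.mem_univ k), Function.update_self, add_comm]
  congr 1
  exact Finset.sum_congr rfl fun i hi =>
    by rw [Function.update_of_ne (Finset.ne_of_mem_erase hi)]


lemma diffC (μ : Measure (Fin n → ℝ)) [IsFiniteMeasure μ]
    (hμ : ∀ u : Fin n → ℝ, Integrable (fun x => Real.exp (∑ i, u i * x i)) μ)
    (z : Fin n → ℂ) (k : Fin n) :
    Differentiable ℂ (fun w => ∫ x, Complex.exp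
      (w * x k + ∑ i ∈ Finset.univ.erase k, z i * x i) ∂μ) := by
  intro w₀
  set a : ℝ := w₀.re with ha
  set u₁ : Fin n → ℝ := Function.update (fun i => (z i).re) k (a + 2) with hu₁
  set u₂ : Fin n → ℝ := Function.update (fun i => (z i).re) k (a - 2) with hu₂
  -- sums for u₁, u₂
  have hsum : ∀ (b : ℝ) (x : Fin n → ℝ), ∑ i, Function.update (fun i => (z i).re) k b i * x i
      = b * x k + ∑ i ∈ Finset.univ.erase k, (z i).re * x i := by
    intro b x
    rw [← Finset.sum_erase_add _ _ (Finset.mem_univ k), Function.update_self, add_comm]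
    congr 1
    exact Finset.sum_congr rfl fun i hi => by
      rw [Function.update_of_ne (Finset.ne_of_mem_erase hi)]
  have hbound : Integrable (fun x => Real.exp (∑ i, u₁ i * x i)
      + Real.exp (∑ i, u₂ i * x i)) μ := (hμ u₁).add (hμ u₂)
  -- pointwise facts
  have hre : ∀ (w : ℂ) (x : Fin n → ℝ),
      (w * x k + ∑ i ∈ Finset.univ.erase k, z i * x i).re
        = w.re * x k + ∑ i ∈ Finset.univ.erase k, (z i).re * x i := by
    intro w x
    rw [Complex.add_re, Complex.re_sum]
    congr 1
    · simp [Complex.mul_re]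
    · exact Finset.sum_congr rfl fun i _ => by simp [Complex.mul_re]
  have key := hasDerivAt_integral_of_dominated_loc_of_deriv_le (μ := μ)
    (F := fun w x => Complex.exp (w * x k + ∑ i ∈ Finset.univ.erase k, z i * x i))
    (F' := fun w x => (x k : ℂ) * Complex.exp (w * x k + ∑ i ∈ Finset.univ.erase k, z i * x i))
    (x₀ := w₀)
    (bound := fun x => Real.exp (∑ i, u₁ i * x i) + Real.exp (∑ i, u₂ i * x i))
    (Metric.ball_mem_nhds w₀ one_pos) ?_ ?_ ?_ ?_ hbound ?_
  · exact key.2.differentiableAt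
  · filter_upwards with w
    exact (Continuous.aestronglyMeasurable (by fun_prop))
  · exact integrableC μ hμ _ |>.congr (by
      filter_upwards with x
      rw [sum_update])
  · exact Continuous.aestronglyMeasurable (by fun_prop)
  · filter_upwards with x
    intro w hw
    have hwre : |w.re - a| ≤ 1 := by
      have : |(w - w₀).re| ≤ ‖w - w₀‖ := Complex.abs_re_le_norm _
      simp only [Complex.sub_re] at this
      have h2 : ‖w - w₀‖ ≤ 1 := le_of_lt (by simpa [Metric.mem_ball, dist_eq_norm] using hw)
      exact this.trans h2
    rw [norm_mul, Complex.norm_exp, hre]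
    set s := ∑ i ∈ Finset.univ.erase k, (z i).re * x i
    have h1 : ‖((x k : ℝ) : ℂ)‖ * Real.exp (w.re * x k + s)
        ≤ Real.exp (a * x k + 2 * |x k| + s) := by
      have hxk : ‖((x k : ℝ) : ℂ)‖ = |x k| := by rw [Complex.norm_real, Real.norm_eq_abs]
      rw [hxk]
      have h3 : |x k| ≤ Real.exp |x k| := by
        have := Real.add_one_le_exp |x k|; linarith
      have h4 : w.re * x k ≤ a * x k + |x k| := by
        have : (w.re - a) * x k ≤ |x k| := by
          calc (w.re - a) * x k ≤ |(w.re - a) * x k| := le_abs_self _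
          _ = |w.re - a| * |x k| := abs_mul _ _
          _ ≤ 1 * |x k| := mul_le_mul_of_nonneg_right hwre (abs_nonneg _)
          _ = |x k| := one_mul _
        linarith
      calc |x k| * Real.exp (w.re * x k + s)
          ≤ Real.exp |x k| * Real.exp (a * x k + |x k| + s) := by
            apply mul_le_mul h3 (Real.exp_le_exp.2 (by linarith)) (Real.exp_nonneg _)
              (Real.exp_nonneg _)
        _ = Real.exp (a * x k + 2 * |x k| + s) := by
            rw [← Real.exp_add]; ring_nf
    refine h1.trans ?_
    have h5 : Real.exp (a * x k + 2 * |x k| + s)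
        ≤ Real.exp ((a + 2) * x k + s) + Real.exp ((a - 2) * x k + s) := by
      rcases abs_cases (x k) with ⟨h, _⟩ | ⟨h, _⟩
      · rw [h]
        have : a * x k + 2 * x k + s = (a + 2) * x k + s := by ring
        rw [this]
        exact le_add_of_nonneg_right (Real.exp_nonneg _)
      · rw [h]
        have : a * x k + 2 * -(x k) + s = (a - 2) * x k + s := by ring
        rw [this]
        exact le_add_of_nonneg_left (Real.exp_nonneg _)
    refine h5.trans ?_
    rw [hsum, hsum]
  · filter_upwards with x
    intro w hw
    have h0 : HasDerivAt (fun w : ℂ => w * (x k : ℂ) + ∑ i ∈ Finset.univ.erase k, z i * x i)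
        (x k : ℂ) w := by
      simpa using ((hasDerivAt_id w).mul_const ((x k : ℝ) : ℂ)).add_const
        (∑ i ∈ Finset.univ.erase k, z i * (x i : ℂ))
    simpa [mul_comm] using h0.cexp


lemma complexEq (μ ν : Measure (Fin n → ℝ)) [IsFiniteMeasure μ] [IsFiniteMeasure ν]
    (hμ : ∀ u : Fin n → ℝ, Integrable (fun x => Real.exp (∑ i, u i * x i)) μ)
    (hν : ∀ u : Fin n → ℝ, Integrable (fun x => Real.exp (∑ i, u i * x i)) ν)
    (heq : ∀ u : Fin n → ℝ,
      ∫ x, Real.exp (∑ i, u i * x i) ∂μ = ∫ x, Real.exp (∑ i, u i * x i) ∂ν)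
    (z : Fin n → ℂ) :
    ∫ x, Complex.exp (∑ i, z i * x i) ∂μ = ∫ x, Complex.exp (∑ i, z i * x i) ∂ν := by
  suffices H : ∀ m : ℕ, ∀ z : Fin n → ℂ, (∀ i : Fin n, m ≤ (i : ℕ) → (z i).im = 0) →
      ∫ x, Complex.exp (∑ i, z i * x i) ∂μ = ∫ x, Complex.exp (∑ i, z i * x i) ∂ν by
    exact H n z (fun i hi => absurd i.isLt (by omega))
  intro m
  induction m with
  | zero =>
    intro z hz
    have hzr : ∀ i : Fin n, z i = ((z i).re : ℂ) := fun i =>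
      Complex.ext rfl (by simpa using hz i (Nat.zero_le _))
    have hsum : ∀ x : Fin n → ℝ, ∑ i, z i * (x i : ℂ)
        = ((∑ i, (z i).re * x i : ℝ) : ℂ) := by
      intro x
      rw [Complex.ofReal_sum]
      refine Finset.sum_congr rfl fun i _ => ?_
      conv_lhs => rw [hzr i]
      exact (Complex.ofReal_mul _ _).symm
    simp only [hsum]
    have hrw : ∀ (σ : Measure (Fin n → ℝ)),
        ∫ x, Complex.exp ((∑ i, (z i).re * x i : ℝ) : ℂ) ∂σ
          = ((∫ x, Real.exp (∑ i, (z i).re * x i) ∂σ : ℝ) : ℂ) := by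
      intro σ
      calc ∫ x, Complex.exp ((∑ i, (z i).re * x i : ℝ) : ℂ) ∂σ
          = ∫ x, ((Real.exp (∑ i, (z i).re * x i) : ℝ) : ℂ) ∂σ :=
            integral_congr_ae (by filter_upwards with x; rw [Complex.ofReal_exp])
        _ = ((∫ x, Real.exp (∑ i, (z i).re * x i) ∂σ : ℝ) : ℂ) := integral_ofReal
    rw [hrw μ, hrw ν, heq]
  | succ m ih =>
    intro z hz
    by_cases hm : m < n
    · set k : Fin n := ⟨m, hm⟩ with hk
      have hfun : (fun w => ∫ x, Complex.exp
            (w * x k + ∑ i ∈ Finset.univ.erase k, z i * x i) ∂μ)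
          = (fun w => ∫ x, Complex.exp
            (w * x k + ∑ i ∈ Finset.univ.erase k, z i * x i) ∂ν) := by
        apply AnalyticOnNhd.eq_of_frequently_eq (z₀ := (0 : ℂ))
        · exact ((diffC μ hμ z k).differentiableOn).analyticOnNhd isOpen_univ
        · exact ((diffC ν hν z k).differentiableOn).analyticOnNhd isOpen_univ
        · have hreal : ∀ t : ℝ, ∫ x, Complex.exp
              ((t : ℂ) * x k + ∑ i ∈ Finset.univ.erase k, z i * x i) ∂μ
              = ∫ x, Complex.exp
              ((t : ℂ) * x k + ∑ i ∈ Finset.univ.erase k, z i * x i) ∂ν := by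
            intro t
            have := ih (Function.update z k (t : ℂ)) ?_
            · simpa only [sum_update] using this
            · intro i hi
              rcases eq_or_ne i k with rfl | hik
              · simp
              · rw [Function.update_of_ne hik]
                refine hz i ?_
                have : (i : ℕ) ≠ m := fun h => hik (Fin.ext h)
                omega
          have htend : Tendsto (fun j : ℕ => (((1 : ℝ) / (j + 1) : ℝ) : ℂ)) atTop
              (nhdsWithin (0 : ℂ) {(0 : ℂ)}ᶜ) := by
            rw [tendsto_nhdsWithin_iff]
            constructor
            · have : Tendsto (fun j : ℕ => (1 : ℝ) / (j + 1)) atTop (nhds 0) :=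
                tendsto_one_div_add_atTop_nhds_zero_nat
              have h2 := (Complex.continuous_ofReal.tendsto 0).comp this
              simp only [Function.comp_def, Complex.ofReal_zero] at h2
              convert h2 using 2 <;> norm_num
            · filter_upwards with j
              simp only [mem_compl_iff, mem_singleton_iff]
              intro h
              have : (1 : ℝ) / (j + 1) = 0 := by exact_mod_cast h
              have : (0:ℝ) < 1 / (j+1) := by positivity
              linarith [‹(1 : ℝ) / (j + 1) = 0›]
          exact htend.frequently (Frequently.of_forall fun j => hreal _)
      have := congrFun hfun (z k)
      have hzz : ∀ x : Fin n → ℝ, z k * (x k : ℂ) + ∑ i ∈ Finset.univ.erase k, z i * x i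
          = ∑ i, z i * x i := fun x => by
        simpa using (sum_update z k (z k) x).symm.trans (by rw [Function.update_eq_self])
      rw [show (fun x : Fin n → ℝ => Complex.exp (∑ i, z i * x i)) = fun x => Complex.exp (z k * x k + ∑ i ∈ Finset.univ.erase k, z i * x i) from funext fun x => congrArg Complex.exp (hzz x).symm]
      exact this
    · exact ih z (fun i hi => absurd i.isLt (by omega))


/-- A smooth compactly supported function as a Schwartz map. -/
noncomputable def toSchwartz (g : EuclideanSpace ℝ (Fin n) → ℂ)
    (hg : ContDiff ℝ ∞ g) (hsupp : HasCompactSupport g) :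
    SchwartzMap (EuclideanSpace ℝ (Fin n)) ℂ where
  toFun := g
  smooth' := hg
  decay' := by
    intro k m
    have hcont : Continuous fun x : EuclideanSpace ℝ (Fin n) =>
        ‖x‖ ^ k * ‖iteratedFDeriv ℝ m g x‖ :=
      ((continuous_norm.pow k).mul (hg.continuous_iteratedFDeriv (mod_cast le_top)).norm)
    have hcs : HasCompactSupport fun x : EuclideanSpace ℝ (Fin n) =>
        ‖x‖ ^ k * ‖iteratedFDeriv ℝ m g x‖ :=
      ((hsupp.iteratedFDeriv m).norm).mul_left
    obtain ⟨C, hC⟩ := hcont.bounded_above_of_compact_support hcs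
    exact ⟨C, fun x => (le_abs_self _).trans ((Real.norm_eq_abs _ ▸ hC x))⟩


lemma norm_char (r : ℝ) (c : ℂ) : ‖Complex.exp ((r : ℂ) * Complex.I) * c‖ = ‖c‖ := by
  rw [norm_mul, Complex.norm_exp_ofReal_mul_I, one_mul]

lemma integral_smooth_eq_of_char (μ ν : Measure (EuclideanSpace ℝ (Fin n)))
    [IsFiniteMeasure μ] [IsFiniteMeasure ν]
    (hch : ∀ v : EuclideanSpace ℝ (Fin n),
      ∫ w, Complex.exp (((2 * π * ⟪v, w⟫ : ℝ) : ℂ) * Complex.I) ∂μ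
        = ∫ w, Complex.exp (((2 * π * ⟪v, w⟫ : ℝ) : ℂ) * Complex.I) ∂ν)
    (g : EuclideanSpace ℝ (Fin n) → ℂ) (hg : ContDiff ℝ ∞ g)
    (hsupp : HasCompactSupport g) :
    ∫ w, g w ∂μ = ∫ w, g w ∂ν := by
  set gS : SchwartzMap (EuclideanSpace ℝ (Fin n)) ℂ := toSchwartz g hg hsupp with hgS
  set h : SchwartzMap (EuclideanSpace ℝ (Fin n)) ℂ := SchwartzMap.fourierTransformCLE ℂ (SchwartzMap (EuclideanSpace ℝ (Fin n)) ℂ) gS with hh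
  have hhco : (h : EuclideanSpace ℝ (Fin n) → ℂ) = 𝓕 (⇑gS) := by
    rw [hh]; rfl
  have hgint : Integrable (⇑gS) volume := gS.integrable
  have hhint : Integrable (⇑h) volume := h.integrable
  have hinv : ∀ w : EuclideanSpace ℝ (Fin n), g w = ∫ v : EuclideanSpace ℝ (Fin n), Complex.exp (((2 * π * ⟪v, w⟫ : ℝ) : ℂ) * Complex.I)
      * h v := by
    intro w
    have hfi : 𝓕⁻ (𝓕 ⇑gS) = ⇑gS := by
      apply Continuous.fourierInv_fourier_eq (hg.continuous) hgint
      show Integrable (𝓕 ⇑gS) volume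
      rw [← hhco]; exact hhint
    have : g w = 𝓕⁻ (⇑h) w := by
      rw [hhco, hfi]; rfl
    rw [this, Real.fourierInv_eq']
    simp_rw [smul_eq_mul]
  have key : ∀ (σ : Measure (EuclideanSpace ℝ (Fin n))), IsFiniteMeasure σ →
      ∫ w, g w ∂σ
        = ∫ v : EuclideanSpace ℝ (Fin n), (∫ w, Complex.exp (((2 * π * ⟪v, w⟫ : ℝ) : ℂ) * Complex.I) ∂σ) * h v := by
    intro σ hσ
    have hcont : Continuous (Function.uncurry fun (w v : EuclideanSpace ℝ (Fin n)) =>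
        Complex.exp (((2 * π * ⟪v, w⟫ : ℝ) : ℂ) * Complex.I) * h v) := by
      apply Continuous.mul
      · apply Complex.continuous_exp.comp
        apply Continuous.mul ?_ continuous_const
        apply Complex.continuous_ofReal.comp
        exact continuous_const.mul ((continuous_snd.inner continuous_fst))
      · exact h.continuous.comp continuous_snd
    have hint : Integrable (Function.uncurry fun (w v : EuclideanSpace ℝ (Fin n)) =>
        Complex.exp (((2 * π * ⟪v, w⟫ : ℝ) : ℂ) * Complex.I) * h v) (σ.prod volume) := by
      rw [integrable_prod_iff hcont.aestronglyMeasurable]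
      constructor
      · filter_upwards with w
        refine hhint.norm.mono' ?_ ?_
        · exact (hcont.comp (Continuous.prodMk_right w)).aestronglyMeasurable
        · filter_upwards with v
          simp only [Function.uncurry_apply_pair, norm_char]
          exact le_rfl
      · apply (integrable_const (∫ v : EuclideanSpace ℝ (Fin n), ‖h v‖ ∂volume)).congr
        filter_upwards with w
        refine integral_congr_ae ?_
        filter_upwards with v
        simp only [Function.uncurry_apply_pair, norm_char]
    calc ∫ w, g w ∂σ
        = ∫ w, ∫ v : EuclideanSpace ℝ (Fin n), Complex.exp (((2 * π * ⟪v, w⟫ : ℝ) : ℂ) * Complex.I) * h v ∂volume ∂σ :=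
          integral_congr_ae (by filter_upwards with w; exact hinv w)
      _ = ∫ v : EuclideanSpace ℝ (Fin n), ∫ w, Complex.exp (((2 * π * ⟪v, w⟫ : ℝ) : ℂ) * Complex.I) * h v ∂σ ∂volume :=
          integral_integral_swap hint
      _ = ∫ v : EuclideanSpace ℝ (Fin n), (∫ w, Complex.exp (((2 * π * ⟪v, w⟫ : ℝ) : ℂ) * Complex.I) ∂σ) * h v ∂volume := by
          refine integral_congr_ae ?_
          filter_upwards with v
          exact integral_mul_const _ _
  rw [key μ inferInstance, key ν inferInstance]
  refine integral_congr_ae ?_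
  filter_upwards with v
  rw [hch v]

end LaplaceUnique

open LaplaceUnique in
set_option maxHeartbeats 1000000 in
/-- Two finite measures on ℝⁿ with everywhere-finite and equal Laplace transforms are equal. -/
theorem measure_eq_of_laplace_eq (n : ℕ) (hn : 1 ≤ n)
    (μ ν : Measure (Fin n → ℝ)) [IsFiniteMeasure μ] [IsFiniteMeasure ν]
    (hμ : ∀ u : Fin n → ℝ, Integrable (fun x => Real.exp (∑ i, u i * x i)) μ)
    (hν : ∀ u : Fin n → ℝ, Integrable (fun x => Real.exp (∑ i, u i * x i)) ν)
    (heq : ∀ u : Fin n → ℝ,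
      ∫ x, Real.exp (∑ i, u i * x i) ∂μ = ∫ x, Real.exp (∑ i, u i * x i) ∂ν) :
    μ = ν := by
  classical
  -- characteristic functions agree
  have hchar : ∀ v : Fin n → ℝ,
      ∫ x, Complex.exp (((2 * π * ∑ i, v i * x i : ℝ) : ℂ) * Complex.I) ∂μ
        = ∫ x, Complex.exp (((2 * π * ∑ i, v i * x i : ℝ) : ℂ) * Complex.I) ∂ν := by
    intro v
    have hz := complexEq μ ν hμ hν heq (fun i => ((2 * π * v i : ℝ) : ℂ) * Complex.I)
    have hsum : ∀ x : Fin n → ℝ,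
        ∑ i, ((2 * π * v i : ℝ) : ℂ) * Complex.I * (x i : ℂ)
          = ((2 * π * ∑ i, v i * x i : ℝ) : ℂ) * Complex.I := by
      intro x
      have h1 : ∀ i : Fin n, ((2 * π * v i : ℝ) : ℂ) * Complex.I * (x i : ℂ)
          = ((2 * π * (v i * x i) : ℝ) : ℂ) * Complex.I := by
        intro i; push_cast; ring
      rw [Finset.sum_congr rfl fun i _ => h1 i, ← Finset.sum_mul]
      congr 1
      rw [← Complex.ofReal_sum]
      congr 1
      rw [Finset.mul_sum]
    simpa only [hsum] using hz
  -- transfer to Euclidean space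
  set eqE : EuclideanSpace ℝ (Fin n) ≃L[ℝ] (Fin n → ℝ) := EuclideanSpace.equiv (Fin n) ℝ with heqE
  set me : (Fin n → ℝ) ≃ᵐ EuclideanSpace ℝ (Fin n) :=
    eqE.symm.toHomeomorph.toMeasurableEquiv with hme
  haveI hfinμ : IsFiniteMeasure (Measure.map me μ) := by
    constructor
    rw [Measure.map_apply me.measurable MeasurableSet.univ]
    exact measure_lt_top μ _
  haveI hfinν : IsFiniteMeasure (Measure.map me ν) := by
    constructor
    rw [Measure.map_apply me.measurable MeasurableSet.univ]
    exact measure_lt_top ν _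
  have hinner : ∀ (v : EuclideanSpace ℝ (Fin n)) (x : Fin n → ℝ),
      (inner ℝ v (me x) : ℝ) = ∑ i, v i * x i := by
    intro v x
    rw [PiLp.inner_apply]
    refine Finset.sum_congr rfl fun i _ => ?_
    have hxi : (me x) i = x i := rfl
    rw [RCLike.inner_apply, starRingEnd_apply, star_trivial, hxi, mul_comm]
  have hch : ∀ v : EuclideanSpace ℝ (Fin n),
      ∫ w, Complex.exp (((2 * π * (inner ℝ v w : ℝ) : ℝ) : ℂ) * Complex.I) ∂(Measure.map me μ)
        = ∫ w, Complex.exp (((2 * π * (inner ℝ v w : ℝ) : ℝ) : ℂ) * Complex.I)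
          ∂(Measure.map me ν) := by
    intro v
    rw [MeasureTheory.integral_map_equiv, MeasureTheory.integral_map_equiv]
    simp only [hinner]
    exact hchar v
  have hB := integral_smooth_eq_of_char (Measure.map me μ) (Measure.map me ν) hch
  -- equality of integrals of smooth compactly supported real functions on ℝⁿ
  have hE : ∀ g : (Fin n → ℝ) → ℝ, ContDiff ℝ ∞ g → HasCompactSupport g →
      ∫ x, g x ∂μ = ∫ x, g x ∂ν := by
    intro g hg hgs
    set gV : EuclideanSpace ℝ (Fin n) → ℂ := fun v => ((g (eqE v) : ℝ) : ℂ) with hgV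
    have hgVc : ContDiff ℝ ∞ gV :=
      Complex.ofRealCLM.contDiff.comp (hg.comp eqE.contDiff)
    have hgVs : HasCompactSupport gV := by
      have h1 : HasCompactSupport (Complex.ofReal ∘ g) := hgs.comp_left (by simp)
      have h2 : HasCompactSupport (fun x : Fin n → ℝ => ((g x : ℝ) : ℂ)) := by
        simpa [Function.comp_def] using h1
      exact h2.comp_homeomorph eqE.toHomeomorph
    have := hB gV hgVc hgVs
    rw [MeasureTheory.integral_map_equiv, MeasureTheory.integral_map_equiv] at this
    have hid : ∀ x : Fin n → ℝ, gV (me x) = ((g x : ℝ) : ℂ) := fun x => by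
      simp only [hgV]
      exact congrArg (fun y => ((g y : ℝ) : ℂ)) (eqE.apply_symm_apply x)
    simp only [hid] at this
    have e1 : ∫ x, ((g x : ℝ) : ℂ) ∂μ = ((∫ x, g x ∂μ : ℝ) : ℂ) := integral_ofReal
    have e2 : ∫ x, ((g x : ℝ) : ℂ) ∂ν = ((∫ x, g x ∂ν : ℝ) : ℂ) := integral_ofReal
    rw [e1, e2] at this
    exact_mod_cast this
  -- Radon-Nikodym densities agree
  set ρ : Measure (Fin n → ℝ) := μ + ν with hρ
  haveI : IsFiniteMeasure ρ := inferInstanceAs (IsFiniteMeasure (μ + ν))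
  haveI hLμ : μ.HaveLebesgueDecomposition ρ := Measure.haveLebesgueDecomposition_of_sigmaFinite μ ρ
  haveI hLν : ν.HaveLebesgueDecomposition ρ := Measure.haveLebesgueDecomposition_of_sigmaFinite ν ρ
  have hμρ : μ ≪ ρ := Measure.absolutelyContinuous_of_le (Measure.le_add_right le_rfl)
  have hνρ : ν ≪ ρ := Measure.absolutelyContinuous_of_le (Measure.le_add_left le_rfl)
  have hfint : Integrable (fun x => (μ.rnDeriv ρ x).toReal) ρ := Measure.integrable_toReal_rnDeriv
  have hf'int : Integrable (fun x => (ν.rnDeriv ρ x).toReal) ρ := Measure.integrable_toReal_rnDeriv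
  have hae : ∀ᵐ x ∂ρ, (μ.rnDeriv ρ x).toReal = (ν.rnDeriv ρ x).toReal := by
    apply ae_eq_of_integral_contDiff_smul_eq hfint.locallyIntegrable hf'int.locallyIntegrable
    intro g hg hgs
    have h1 : ∫ x, g x • (μ.rnDeriv ρ x).toReal ∂ρ = ∫ x, g x ∂μ := by
      rw [← integral_rnDeriv_smul hμρ (f := g)]
      exact integral_congr_ae (by filter_upwards with x; simp [smul_eq_mul, mul_comm])
    have h2 : ∫ x, g x • (ν.rnDeriv ρ x).toReal ∂ρ = ∫ x, g x ∂ν := by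
      rw [← integral_rnDeriv_smul hνρ (f := g)]
      exact integral_congr_ae (by filter_upwards with x; simp [smul_eq_mul, mul_comm])
    rw [h1, h2]
    exact hE g hg hgs
  have hae' : μ.rnDeriv ρ =ᵐ[ρ] ν.rnDeriv ρ := by
    filter_upwards [hae, Measure.rnDeriv_lt_top μ ρ, Measure.rnDeriv_lt_top ν ρ] with x h1 h2 h3
    exact (ENNReal.toReal_eq_toReal_iff' h2.ne h3.ne).mp h1
  calc μ = ρ.withDensity (μ.rnDeriv ρ) := (Measure.withDensity_rnDeriv_eq μ ρ hμρ).symm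
    _ = ρ.withDensity (ν.rnDeriv ρ) := withDensity_congr_ae hae'
    _ = ν := Measure.withDensity_rnDeriv_eq ν ρ hνρ
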